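/- Suppose the true value functions J_t^* and approximate value functions \hat J_t satisfy the recursions with exact transition matrix P^t and approximate transition matrix \hat P^t respectively (same costs), and that for each t the row-wise total variation distance between P^t and \hat P^t is at most delta, and |c + J_{t+1}^*| <= B_t pointwise. Then max_x |J_t^*(x) - \hat J_t(x)| <= max_x |J_{t+1}^*(x) - \hat J_{t+1}(x)| + 2 delta B_t; iterating, the error at time 0 is at most 2 delta sum_t B_t. -/

import Mathlib

open Finset

lemma abs_inf'_sub_inf'_le {A : Type*} {s : Finset A} (hs : s.Nonempty)
    (f g : A → ℝ) (M : ℝ) (h : ∀ a ∈ s, |f a - g a| ≤ M) :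
    |s.inf' hs f - s.inf' hs g| ≤ M := by
  rw [abs_sub_le_iff]
  constructor
  · obtain ⟨a, ha, hag⟩ := s.exists_mem_eq_inf' hs g
    calc s.inf' hs f - s.inf' hs g ≤ f a - g a := by
          rw [hag]; exact sub_le_sub_right (inf'_le _ ha) _
      _ ≤ M := (abs_le.1 (h a ha)).2.trans_eq' rfl |>.trans_eq rfl
  · obtain ⟨a, ha, haf⟩ := s.exists_mem_eq_inf' hs f
    calc s.inf' hs g - s.inf' hs f ≤ g a - f a := by
          rw [haf]; exact sub_le_sub_right (inf'_le _ ha) _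
      _ ≤ M := by have := (abs_le.1 (h a ha)).1; linarith

/-- Error propagation for dynamic programming with an approximate transition
matrix: if the row-wise total variation distance between `P^t` and `P̂^t` is at
most `δ` and `|c + J_{t+1}^*| ≤ B t`, then the one-step error satisfies
`max_x |J_t^*(x) − Ĵ_t(x)| ≤ max_x |J_{t+1}^*(x) − Ĵ_{t+1}(x)| + 2 δ B t`, and
iterating, the error at time 0 is at most `2 δ ∑_t B t`. -/
theorem dp_error_propagation
    {X A : Type} [Fintype X] [Nonempty X]
    (N : ℕ)
    (feas : X → Finset A) (hfeas : ∀ x, (feas x).Nonempty)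
    (P Phat : ℕ → X → A → X → ℝ)
    (hPnonneg : ∀ t x a y, 0 ≤ P t x a y)
    (hPsum : ∀ t x a, ∑ y, P t x a y = 1)
    (hPhatnonneg : ∀ t x a y, 0 ≤ Phat t x a y)
    (hPhatsum : ∀ t x a, ∑ y, Phat t x a y = 1)
    (δ : ℝ) (hδ : 0 ≤ δ)
    (hTV : ∀ t x a, (1 / 2) * ∑ y, |P t x a y - Phat t x a y| ≤ δ)
    (c : X → A → X → ℝ) (CN : X → ℝ)
    (J Jhat : ℕ → X → ℝ)
    (hJN : ∀ x, J N x = CN x)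
    (hJhatN : ∀ x, Jhat N x = CN x)
    (hJ : ∀ t, t < N → ∀ x,
      J t x = (feas x).inf' (hfeas x)
        (fun a => ∑ y, P t x a y * (c x a y + J (t + 1) y)))
    (hJhat : ∀ t, t < N → ∀ x,
      Jhat t x = (feas x).inf' (hfeas x)
        (fun a => ∑ y, Phat t x a y * (c x a y + Jhat (t + 1) y)))
    (B : ℕ → ℝ)
    (hB : ∀ t, t < N → ∀ x a y, |c x a y + J (t + 1) y| ≤ B t) :
    (∀ t, t < N → ∀ x,
        |J t x - Jhat t x|
          ≤ (univ.sup' univ_nonempty fun x' => |J (t + 1) x' - Jhat (t + 1) x'|)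
            + 2 * δ * B t)
      ∧ ∀ x, |J 0 x - Jhat 0 x| ≤ 2 * δ * ∑ t ∈ Finset.range N, B t := by
  have key : ∀ t, t < N → ∀ x,
      |J t x - Jhat t x|
        ≤ (univ.sup' univ_nonempty fun x' => |J (t + 1) x' - Jhat (t + 1) x'|)
          + 2 * δ * B t := by
    intro t ht x
    set M : ℝ := univ.sup' univ_nonempty fun x' => |J (t + 1) x' - Jhat (t + 1) x'|
    have hM : ∀ y, |J (t + 1) y - Jhat (t + 1) y| ≤ M :=
      fun y => le_sup' (fun x' => |J (t + 1) x' - Jhat (t + 1) x'|) (mem_univ y)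
    rw [hJ t ht x, hJhat t ht x]
    apply abs_inf'_sub_inf'_le
    intro a _
    have split : ∑ y, P t x a y * (c x a y + J (t + 1) y)
        - ∑ y, Phat t x a y * (c x a y + Jhat (t + 1) y)
        = (∑ y, (P t x a y - Phat t x a y) * (c x a y + J (t + 1) y))
          + ∑ y, Phat t x a y * (J (t + 1) y - Jhat (t + 1) y) := by
      rw [← Finset.sum_add_distrib, ← Finset.sum_sub_distrib]
      congr 1; ext y; ring
    rw [split]
    refine (abs_add_le _ _).trans ?_
    have h1 : |∑ y, (P t x a y - Phat t x a y) * (c x a y + J (t + 1) y)|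
        ≤ 2 * δ * B t := by
      refine (Finset.abs_sum_le_sum_abs _ _).trans ?_
      have hBt : 0 ≤ B t := le_trans (abs_nonneg _)
        (hB t ht x a (Classical.arbitrary X))
      calc ∑ y, |(P t x a y - Phat t x a y) * (c x a y + J (t + 1) y)|
          ≤ ∑ y, |P t x a y - Phat t x a y| * B t := by
            refine Finset.sum_le_sum fun y _ => ?_
            rw [abs_mul]
            exact mul_le_mul_of_nonneg_left (hB t ht x a y) (abs_nonneg _)
        _ = (∑ y, |P t x a y - Phat t x a y|) * B t := by
            rw [Finset.sum_mul]
        _ ≤ (2 * δ) * B t := by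
            refine mul_le_mul_of_nonneg_right ?_ hBt
            have := hTV t x a; linarith
        _ = 2 * δ * B t := by ring
    have h2 : |∑ y, Phat t x a y * (J (t + 1) y - Jhat (t + 1) y)| ≤ M := by
      refine (Finset.abs_sum_le_sum_abs _ _).trans ?_
      calc ∑ y, |Phat t x a y * (J (t + 1) y - Jhat (t + 1) y)|
          ≤ ∑ y, Phat t x a y * M := by
            refine Finset.sum_le_sum fun y _ => ?_
            rw [abs_mul, abs_of_nonneg (hPhatnonneg t x a y)]
            exact mul_le_mul_of_nonneg_left (hM y) (hPhatnonneg t x a y)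
        _ = M := by rw [← Finset.sum_mul, hPhatsum t x a, one_mul]
    linarith
  refine ⟨key, ?_⟩
  have iter : ∀ k, k ≤ N → ∀ x,
      |J (N - k) x - Jhat (N - k) x| ≤ 2 * δ * ∑ t ∈ Finset.Ico (N - k) N, B t := by
    intro k
    induction k with
    | zero =>
      intro _ x
      simp [hJN, hJhatN]
    | succ k ih =>
      intro hk x
      have hk' : k ≤ N := Nat.le_of_succ_le hk
      have ht : N - (k + 1) < N := by omega
      have hstep : N - (k + 1) + 1 = N - k := by omega
      have hsum : ∀ y, |J (N - (k + 1) + 1) y - Jhat (N - (k + 1) + 1) y|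
          ≤ 2 * δ * ∑ t ∈ Finset.Ico (N - k) N, B t := by
        intro y; rw [hstep]; exact ih hk' y
      calc |J (N - (k + 1)) x - Jhat (N - (k + 1)) x|
          ≤ (univ.sup' univ_nonempty fun x' =>
              |J (N - (k + 1) + 1) x' - Jhat (N - (k + 1) + 1) x'|)
            + 2 * δ * B (N - (k + 1)) := key _ ht x
        _ ≤ 2 * δ * ∑ t ∈ Finset.Ico (N - k) N, B t + 2 * δ * B (N - (k + 1)) := by
            gcongr
            exact (Finset.sup'_le _ _ fun y _ => hsum y)
        _ = 2 * δ * ∑ t ∈ Finset.Ico (N - (k + 1)) N, B t := by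
            rw [show Finset.Ico (N - (k+1)) N = insert (N - (k+1)) (Finset.Ico (N - k) N) from ?_]
            · rw [Finset.sum_insert (by simp; omega)]; ring
            · rw [show N - k = N - (k + 1) + 1 from by omega]
              exact (Finset.insert_Ico_add_one_left_eq_Ico (by omega)).symm
  intro x
  have := iter N le_rfl x
  simp only [Nat.sub_self] at this
  refine this.trans ?_
  rw [Finset.range_eq_Ico]
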